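/- Let R be a simple idempotent semiring and ∼ a congruence on R. Then the quotient R/∼ is reduced if and only if R/∼ is multiplicatively cancellative. -/
import Mathlib


/-- A congruence on a semiring, as a relation: an equivalence relation compatible with
addition and multiplication. -/
def IsCong {A : Type*} [Add A] [Mul A] (r : A → A → Prop) : Prop :=
  Equivalence r ∧ (∀ a b c d, r a b → r c d → r (a + c) (b + d)) ∧
    ∀ a b c d, r a b → r c d → r (a * c) (b * d)

/-- A prime congruence: `0` is not congruent to `1`, and whenever
`x*y + z*w ∼ x*w + z*y`, either `x ∼ z` or `y ∼ w`. -/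
def IsPrimeCong {A : Type*} [Add A] [Mul A] [Zero A] [One A] (r : A → A → Prop) : Prop :=
  ¬ r 0 1 ∧ ∀ x y z w, r (x * y + z * w) (x * w + z * y) → r x z ∨ r y w


namespace S7
variable {Q : Type*} [CommSemiring Q]

/-- canonical order `a ≤ b` on an idempotent semiring -/
def sle (a b : Q) : Prop := a + b = b

lemma sle_refl (hid : ∀ x : Q, x + x = x) (a : Q) : sle a a := hid a

lemma sle_trans {a b c : Q} (h1 : sle a b) (h2 : sle b c) : sle a c := by
  unfold sle at *; rw [← h2, ← add_assoc, h1]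

lemma sle_antisymm {a b : Q} (h1 : sle a b) (h2 : sle b a) : a = b := by
  unfold sle at *; rw [← h2, add_comm, h1]

lemma zero_sle (a : Q) : sle 0 a := zero_add a

lemma sle_zero {a : Q} (h : sle a 0) : a = 0 := by
  unfold sle at h; rwa [add_zero] at h

lemma add_sle_add {a b c d : Q} (h1 : sle a b) (h2 : sle c d) : sle (a + c) (b + d) := by
  unfold sle at *
  calc a + c + (b + d) = (a + b) + (c + d) := by ring
    _ = b + d := by rw [h1, h2]

lemma mul_sle (c : Q) {a b : Q} (h : sle a b) : sle (a * c) (b * c) := by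
  unfold sle at *; rw [← add_mul, h]

lemma mul_sle_mul {a b c d : Q} (h1 : sle a b) (h2 : sle c d) : sle (a * c) (b * d) :=
  sle_trans (mul_sle c h1) (by rw [mul_comm b c, mul_comm b d]; exact mul_sle b h2)

lemma sle_add_left (hid : ∀ x : Q, x + x = x) (a b : Q) : sle a (a + b) := by
  unfold sle; rw [← add_assoc, hid]

lemma sle_add_right (hid : ∀ x : Q, x + x = x) (a b : Q) : sle b (a + b) := by
  rw [add_comm a b]; exact sle_add_left hid b a

lemma sle_add {a b c : Q} (h1 : sle a c) (h2 : sle b c) : sle (a + b) c := by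
  unfold sle at *; rw [add_assoc, h2, h1]

lemma sle_add_left' (hid : ∀ x : Q, x + x = x) {x a : Q} (b : Q) (h : sle x a) :
    sle x (a + b) := sle_trans h (sle_add_left hid a b)

lemma sle_add_right' (hid : ∀ x : Q, x + x = x) {x b : Q} (a : Q) (h : sle x b) :
    sle x (a + b) := sle_trans h (sle_add_right hid a b)

lemma pow_sle (hid : ∀ x : Q, x + x = x) {a b : Q} (h : sle a b) (n : ℕ) :
    sle (a ^ n) (b ^ n) := by
  induction n with
  | zero => simpa using sle_refl hid 1
  | succ n ih => rw [pow_succ, pow_succ]; exact mul_sle_mul ih h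

lemma sle_congr {X X' Y Y' : Q} (e1 : X = X') (e2 : Y = Y') (h : sle X' Y') : sle X Y := by
  rw [e1, e2]; exact h

lemma ne_zero_of_sle {a b : Q} (h : sle a b) (ha : a ≠ 0) : b ≠ 0 := by
  rintro rfl; exact ha (sle_zero h)

lemma eq_of_sle_of_eq_zero {a b : Q} (h : sle a b) (hb : b = 0) : a = 0 :=
  sle_zero (hb ▸ h)

lemma mul_ne_zero' (hc : ∀ s x y : Q, s ≠ 0 → s * x = s * y → x = y) {a b : Q} (ha : a ≠ 0) (hb : b ≠ 0) : a * b ≠ 0 := by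
  intro h
  exact hb (hc a b 0 ha (by rw [h, mul_zero]))

lemma pow_ne_zero' (hc : ∀ s x y : Q, s ≠ 0 → s * x = s * y → x = y) {a : Q} (ha : a ≠ 0) (n : ℕ) : a ^ n ≠ 0 := by
  induction n with
  | zero => simpa using fun h => ha (by rw [← mul_one a, h, mul_zero])
  | succ n ih => rw [pow_succ]; exact mul_ne_zero' hc ih ha

lemma cancel_sle (hc : ∀ s x y : Q, s ≠ 0 → s * x = s * y → x = y) {s a b : Q} (hs : s ≠ 0) (h : sle (s * a) (s * b)) : sle a b := by
  unfold sle at *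
  exact hc s _ _ hs (by rw [mul_add, h])

/-- splitting lemma : `(s+t)^(n+1) = s*(s+t)^n + t^(n+1)` -/
lemma split_pow (hid : ∀ x : Q, x + x = x) (s t : Q) :
    ∀ n : ℕ, (s + t) ^ (n + 1) = s * (s + t) ^ n + t ^ (n + 1) := by
  intro n
  induction n with
  | zero => simp
  | succ n ih =>
    have habs : sle (s * t ^ (n+1)) (s * (s + t) ^ (n + 1)) :=
      mul_sle_mul (sle_refl hid s) (pow_sle hid (sle_add_right hid s t) (n+1))
    calc (s + t) ^ (n + 2) = (s + t) * (s + t) ^ (n+1) := by ring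
      _ = (s + t) * (s * (s + t) ^ n + t ^ (n + 1)) := by rw [ih]
      _ = s * (s + t) ^ (n+1) + (s * t ^ (n+1) + t ^ (n+2)) := by ring
      _ = (s * t ^ (n+1) + s * (s + t) ^ (n+1)) + t ^ (n+2) := by ring
      _ = s * (s + t) ^ (n+1) + t ^ (n+2) := by rw [habs]

/-- idempotent binomial decomposition -/
lemma binom (hid : ∀ x : Q, x + x = x) (s t : Q) (n m : ℕ) :
    (s + t) ^ (n + m) = (s + t) ^ n * s ^ m + (s + t) ^ m * t ^ n := by
  induction m with
  | zero =>
    have h : sle ((s+t)^0 * t ^ n) ((s+t)^n * s ^ 0) := by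
      simpa using pow_sle hid (sle_add_right hid s t) n
    unfold sle at h
    rw [add_comm ((s+t)^n * s^0), h]
    simp
  | succ m ih =>
    have key : sle ((s+t)^n * s^m * t) ((s + t) ^ n * s ^ (m+1) + (s + t) ^ (m+1) * t ^ n) := by
      cases n with
      | zero =>
        refine sle_add_right' hid _ ?_
        have h2 : sle (s ^ m * t) ((s+t)^m * (s+t)) :=
          mul_sle_mul (pow_sle hid (sle_add_left hid s t) m) (sle_add_right hid s t)
        exact sle_congr (by ring) (by ring) h2
      | succ k =>
        have e : (s+t)^(k+1) * s^m * t = s^(m+1) * (t * (s+t)^k) + s^m * t * t^(k+1) := by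
          rw [split_pow hid s t k]; ring
        rw [e]
        refine sle_add ?_ ?_
        · refine sle_add_left' hid _ ?_
          have h1 : sle (s^(m+1) * (t * (s+t)^k)) (s^(m+1) * ((s+t) * (s+t)^k)) :=
            mul_sle_mul (sle_refl hid _) (mul_sle ((s+t)^k) (sle_add_right hid s t))
          exact sle_congr rfl (by ring) h1
        · refine sle_add_right' hid _ ?_
          have h1 : sle (s^m * t) ((s+t)^m * (s+t)) :=
            mul_sle_mul (pow_sle hid (sle_add_left hid s t) m) (sle_add_right hid s t)
          have h2 := mul_sle (t^(k+1)) h1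
          exact sle_congr rfl (by ring) h2
    unfold sle at key
    calc (s+t)^(n+(m+1)) = (s+t)^n * s^m * t + ((s + t) ^ n * s ^ (m+1) + (s + t) ^ (m+1) * t ^ n) := by
          rw [show n + (m+1) = (n+m) + 1 by ring, pow_succ, ih]; ring
      _ = (s + t) ^ n * s ^ (m+1) + (s + t) ^ (m+1) * t ^ n := key

end S7

namespace S7
variable {Q : Type*} [CommSemiring Q]

/-- An "admissible" set of pairs: encodes a convex ℓ-subgroup of the semifield of
fractions of `Q`, where `(a,b) ∈ C` means "`a/b` belongs to the subgroup". -/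
def AdmOn (C : Set (Q × Q)) : Prop :=
  (∀ a b : Q, (a, b) ∈ C → a ≠ 0 ∧ b ≠ 0) ∧
  (∀ a : Q, a ≠ 0 → (a, a) ∈ C) ∧
  (∀ a b : Q, (a, b) ∈ C → (b, a) ∈ C) ∧
  (∀ a b c d : Q, (a, b) ∈ C → (c, d) ∈ C → (a * c, b * d) ∈ C) ∧
  (∀ a b c d : Q, (a, b) ∈ C → a * d = c * b → c ≠ 0 → d ≠ 0 → (c, d) ∈ C) ∧
  (∀ a b c d : Q, a ≠ 0 → b ≠ 0 → sle b a → sle (a * d) (c * b) → sle d c → (c, d) ∈ C →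
    (a, b) ∈ C) ∧
  (∀ a b : Q, (a, b) ∈ C → (a + b, b) ∈ C)

variable {C : Set (Q × Q)}

lemma AdmOn.nz (hC : AdmOn C) {a b : Q} (h : (a, b) ∈ C) : a ≠ 0 ∧ b ≠ 0 := hC.1 a b h
lemma AdmOn.diag (hC : AdmOn C) {a : Q} (ha : a ≠ 0) : (a, a) ∈ C := hC.2.1 a ha
lemma AdmOn.symm (hC : AdmOn C) {a b : Q} (h : (a, b) ∈ C) : (b, a) ∈ C := hC.2.2.1 a b h
lemma AdmOn.mul (hC : AdmOn C) {a b c d : Q} (h1 : (a, b) ∈ C) (h2 : (c, d) ∈ C) :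
    (a * c, b * d) ∈ C := hC.2.2.2.1 a b c d h1 h2
lemma AdmOn.cross (hC : AdmOn C) {a b c d : Q} (h1 : (a, b) ∈ C) (h : a * d = c * b)
    (hcn : c ≠ 0) (hdn : d ≠ 0) : (c, d) ∈ C := hC.2.2.2.2.1 a b c d h1 h hcn hdn
lemma AdmOn.convex (hC : AdmOn C) {a b c d : Q} (ha : a ≠ 0) (hb : b ≠ 0) (h1 : sle b a)
    (h2 : sle (a * d) (c * b)) (h3 : sle d c) (h4 : (c, d) ∈ C) : (a, b) ∈ C :=
  hC.2.2.2.2.2.1 a b c d ha hb h1 h2 h3 h4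
lemma AdmOn.join1 (hC : AdmOn C) {a b : Q} (h : (a, b) ∈ C) : (a + b, b) ∈ C :=
  hC.2.2.2.2.2.2 a b h

lemma AdmOn.trans (hC : AdmOn C) {a b c : Q} (h1 : (a, b) ∈ C) (h2 : (b, c) ∈ C) :
    (a, c) ∈ C := by
  have h3 := hC.mul h1 h2
  exact hC.cross h3 (by ring) (hC.nz h1).1 (hC.nz h2).2

lemma AdmOn.of_both (hC : AdmOn C) {a b : Q} (h1 : (a + b, b) ∈ C) (h2 : (a + b, a) ∈ C) :
    (a, b) ∈ C := by
  have h3 := hC.mul h1 (hC.symm h2)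
  exact hC.cross h3 (by ring) (hC.nz h2).2 (hC.nz h1).2

lemma AdmOn.join (hid : ∀ x : Q, x + x = x)
    (hc : ∀ s x y : Q, s ≠ 0 → s * x = s * y → x = y)
    (hC : AdmOn C) {x v y w : Q} (h1 : (x, v) ∈ C) (h2 : (y, w) ∈ C) :
    (x * w + y * v, v * w) ∈ C := by
  have k : (y * v, w * x) ∈ C := hC.mul h2 (hC.symm h1)
  have k2 : (y * v + w * x, w * x) ∈ C := hC.join1 k
  have k3 := hC.mul k2 h1
  have hx := (hC.nz h1).1; have hv := (hC.nz h1).2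
  have hy := (hC.nz h2).1; have hw := (hC.nz h2).2
  have hnz : x * w + y * v ≠ 0 := by
    intro h
    exact mul_ne_zero' hc hx hw
      (eq_of_sle_of_eq_zero (sle_add_left hid (x*w) (y*v)) h)
  refine hC.cross k3 (by ring) hnz (mul_ne_zero' hc hv hw)

/-- the diagonal is admissible -/
lemma adm_diagonal (hid : ∀ x : Q, x + x = x)
    (hc : ∀ s x y : Q, s ≠ 0 → s * x = s * y → x = y) :
    AdmOn {p : Q × Q | p.1 ≠ 0 ∧ p.1 = p.2} := by
  refine ⟨?_, ?_, ?_, ?_, ?_, ?_, ?_⟩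
  · rintro a b ⟨h1, h2⟩; simp only at h1 h2; subst h2; exact ⟨h1, h1⟩
  · exact fun a ha => ⟨ha, rfl⟩
  · rintro a b ⟨h1, h2⟩; simp only at h1 h2; subst h2; exact ⟨h1, rfl⟩
  · rintro a b c d ⟨h1, h2⟩ ⟨h3, h4⟩; simp only at h1 h2 h3 h4; subst h2; subst h4
    exact ⟨mul_ne_zero' hc h1 h3, rfl⟩
  · rintro a b c d ⟨h1, h2⟩ h hcn hdn; simp only at h1 h2; subst h2
    refine ⟨hcn, hc a c d h1 ?_⟩
    rw [mul_comm a c, ← h, mul_comm]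
  · rintro a b c d ha hb h1 h2 h3 ⟨hcn, h4⟩
    simp only at hcn h4
    refine ⟨ha, sle_antisymm ?_ h1⟩
    rw [h4] at h2 hcn
    have h2' : sle (d * a) (d * b) := sle_congr (mul_comm d a) rfl h2
    exact cancel_sle hc hcn h2'
  · rintro a b ⟨h1, h2⟩; simp only at h1 h2; subst h2
    exact ⟨by rw [hid a]; exact h1, hid a⟩

/-- a maximal admissible set avoiding `(A, Y)` exists -/
lemma exists_max (hid : ∀ x : Q, x + x = x)
    (hc : ∀ s x y : Q, s ≠ 0 → s * x = s * y → x = y)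
    {A Y : Q} (hAY : A ≠ Y) :
    ∃ M : Set (Q × Q), (AdmOn M ∧ (A, Y) ∉ M) ∧
      ∀ D : Set (Q × Q), AdmOn D → (A, Y) ∉ D → M ⊆ D → D = M := by
  set S : Set (Set (Q × Q)) := {C | AdmOn C ∧ (A, Y) ∉ C} with hS
  have hbase : {p : Q × Q | p.1 ≠ 0 ∧ p.1 = p.2} ∈ S := by
    refine ⟨adm_diagonal hid hc, ?_⟩
    rintro ⟨-, h⟩; exact hAY h
  have hchains : ∀ ch ⊆ S, IsChain (· ⊆ ·) ch → ch.Nonempty → ∃ ub ∈ S, ∀ s ∈ ch, s ⊆ ub := by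
    intro ch hch hchain hne
    refine ⟨⋃₀ ch, ⟨⟨?_, ?_, ?_, ?_, ?_, ?_, ?_⟩, ?_⟩, fun s hs => Set.subset_sUnion_of_mem hs⟩
    · rintro a b ⟨c0, hc0, hm⟩; exact (hch hc0).1.nz hm
    · obtain ⟨c0, hc0⟩ := hne
      exact fun a ha => ⟨c0, hc0, (hch hc0).1.diag ha⟩
    · rintro a b ⟨c0, hc0, hm⟩; exact ⟨c0, hc0, (hch hc0).1.symm hm⟩
    · rintro a b c d ⟨c1, hc1, hm1⟩ ⟨c2, hc2, hm2⟩
      rcases hchain.total hc1 hc2 with h | h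
      · exact ⟨c2, hc2, (hch hc2).1.mul (h hm1) hm2⟩
      · exact ⟨c1, hc1, (hch hc1).1.mul hm1 (h hm2)⟩
    · rintro a b c d ⟨c1, hc1, hm1⟩ h hcn hdn
      exact ⟨c1, hc1, (hch hc1).1.cross hm1 h hcn hdn⟩
    · rintro a b c d ha hb h1 h2 h3 ⟨c1, hc1, hm1⟩
      exact ⟨c1, hc1, (hch hc1).1.convex ha hb h1 h2 h3 hm1⟩
    · rintro a b ⟨c1, hc1, hm1⟩; exact ⟨c1, hc1, (hch hc1).1.join1 hm1⟩
    · rintro ⟨c1, hc1, hm1⟩; exact (hch hc1).2 hm1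
  obtain ⟨M, -, hmax⟩ := zorn_subset_nonempty S hchains _ hbase
  refine ⟨M, hmax.1, fun D hD hDav hMD => ?_⟩
  exact le_antisymm (hmax.2 ⟨hD, hDav⟩ hMD) hMD

end S7

namespace S7
variable {Q : Type*} [CommSemiring Q]

lemma step (hid : ∀ x : Q, x + x = x)
    (hc : ∀ s x y : Q, s ≠ 0 → s * x = s * y → x = y)
    (h1n : (1 : Q) ≠ 0)
    {A Y : Q} (hY : Y ≠ 0) (hYA : sle Y A)
    {M : Set (Q × Q)} (hM : AdmOn M) (hMav : (A, Y) ∉ M)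
    (hmax : ∀ D : Set (Q × Q), AdmOn D → (A, Y) ∉ D → M ⊆ D → D = M)
    {s t : Q} (hs : s ≠ 0) (ht : t ≠ 0) (hst : (s + t, t) ∉ M) :
    ∃ (n : ℕ) (c d : Q), (c, d) ∈ M ∧ sle d c ∧
      sle (A * (d * t ^ n)) (c * ((s + t) ^ n * Y)) := by
  have hA : A ≠ 0 := ne_zero_of_sle hYA hY
  set D : Set (Q × Q) := {p | p.1 ≠ 0 ∧ p.2 ≠ 0 ∧ ∃ (n : ℕ) (c d : Q), (c, d) ∈ M ∧ sle d c ∧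
      sle ((p.1 + p.2) ^ 2 * (d * t ^ n)) (c * ((s + t) ^ n * (p.1 * p.2)))} with hDdef
  have memD : ∀ a b : Q, (a, b) ∈ D ↔ (a ≠ 0 ∧ b ≠ 0 ∧ ∃ (n : ℕ) (c d : Q), (c, d) ∈ M ∧
      sle d c ∧ sle ((a + b) ^ 2 * (d * t ^ n)) (c * ((s + t) ^ n * (a * b)))) := by
    intro a b; rfl
  have hDadm : AdmOn D := by
    refine ⟨?_, ?_, ?_, ?_, ?_, ?_, ?_⟩
    · intro a b hm; rw [memD] at hm; exact ⟨hm.1, hm.2.1⟩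
    · intro a ha
      rw [memD]
      refine ⟨ha, ha, 0, 1, 1, hM.diag h1n, sle_refl hid 1, ?_⟩
      exact sle_congr (by rw [hid a]; ring) (by ring) (sle_refl hid (a * a))
    · intro a b hm
      rw [memD] at hm ⊢
      obtain ⟨ha, hb, n, c, d, hmem, hdc, hin⟩ := hm
      exact ⟨hb, ha, n, c, d, hmem, hdc,
        sle_congr (by rw [add_comm b a]) (by ring) hin⟩
    · intro a b a' b' hm1 hm2
      rw [memD] at hm1 hm2 ⊢
      obtain ⟨ha, hb, n, c, d, hmem, hdc, hin1⟩ := hm1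
      obtain ⟨ha', hb', n', c', d', hmem', hdc', hin2⟩ := hm2
      refine ⟨mul_ne_zero' hc ha ha', mul_ne_zero' hc hb hb', n + n', c * c', d * d',
        hM.mul hmem hmem', mul_sle_mul hdc hdc', ?_⟩
      have s1 : sle (a * a' + b * b') ((a + b) * (a' + b')) :=
        sle_add (mul_sle_mul (sle_add_left hid a b) (sle_add_left hid a' b'))
          (mul_sle_mul (sle_add_right hid a b) (sle_add_right hid a' b'))
      have stepA : sle ((a * a' + b * b') ^ 2) ((a + b) ^ 2 * (a' + b') ^ 2) :=
        sle_congr (pow_two _) (by ring) (mul_sle_mul s1 s1)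
      have m1 := mul_sle ((d * d') * t ^ (n + n')) stepA
      have m2 := mul_sle_mul hin1 hin2
      exact sle_trans m1 (sle_congr (by ring) (by ring) m2)
    · intro a b c0 d0 hm hcross hc0 hd0
      rw [memD] at hm ⊢
      obtain ⟨ha, hb, n, c, d, hmem, hdc, hin⟩ := hm
      refine ⟨hc0, hd0, n, c, d, hmem, hdc, ?_⟩
      have e1 : (c0 * a) * (c0 * b) = (c0 * a) * (a * d0) := by rw [hcross]
      have e2 : (d0 * b) * (a * d0) = (d0 * b) * (c0 * b) := by rw [hcross]
      have e : (c0 + d0) ^ 2 * (a * b) = (a + b) ^ 2 * (c0 * d0) := by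
        calc (c0 + d0) ^ 2 * (a * b)
            = (c0 * a) * (c0 * b) + 2 * ((c0 * d0) * (a * b)) + (d0 * b) * (a * d0) := by ring
          _ = (c0 * a) * (a * d0) + 2 * ((c0 * d0) * (a * b)) + (d0 * b) * (c0 * b) := by
              rw [e1, e2]
          _ = (a + b) ^ 2 * (c0 * d0) := by ring
      have m1 := mul_sle (c0 * d0) hin
      have m2 : sle ((a * b) * ((c0 + d0) ^ 2 * (d * t ^ n)))
          ((a * b) * (c * ((s + t) ^ n * (c0 * d0)))) := by
        refine sle_congr ?_ (by ring) m1
        calc (a * b) * ((c0 + d0) ^ 2 * (d * t ^ n))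
            = ((c0 + d0) ^ 2 * (a * b)) * (d * t ^ n) := by ring
          _ = ((a + b) ^ 2 * (c0 * d0)) * (d * t ^ n) := by rw [e]
          _ = (a + b) ^ 2 * (d * t ^ n) * (c0 * d0) := by ring
      exact cancel_sle hc (mul_ne_zero' hc ha hb) m2
    · intro a b c0 d0 ha hb h1 h2 h3 hm
      rw [memD] at hm ⊢
      obtain ⟨hc0, hd0, n, c, d, hmem, hdc, hin⟩ := hm
      have ec : c0 + d0 = c0 := by rw [add_comm]; exact h3
      rw [ec] at hin
      have hred : sle (c0 * (d * t ^ n)) (c * ((s + t) ^ n * d0)) :=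
        cancel_sle hc hc0 (sle_congr (by ring) (by ring) hin)
      refine ⟨ha, hb, n, c, d, hmem, hdc, ?_⟩
      have u1 := mul_sle (a * (d * t ^ n)) h2
      have u2 := mul_sle (a * b) hred
      have u3 : sle (d0 * (a ^ 2 * (d * t ^ n))) (d0 * (c * ((s + t) ^ n * (a * b)))) := by
        refine sle_trans (sle_congr (by ring) (by ring) u1) (sle_congr rfl (by ring) u2)
      have v := cancel_sle hc hd0 u3
      have ea : a + b = a := by rw [add_comm]; exact h1
      exact sle_congr (by rw [ea]) rfl v
    · intro a b hm
      rw [memD] at hm ⊢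
      obtain ⟨ha, hb, n, c, d, hmem, hdc, hin⟩ := hm
      have eab : a + b + b = a + b := by rw [add_assoc, hid b]
      refine ⟨ne_zero_of_sle (sle_add_left hid a b) ha, hb, n, c, d, hmem, hdc, ?_⟩
      have inner : sle (a * b) ((a + b) * b) := mul_sle b (sle_add_left hid a b)
      have m : sle (c * ((s + t) ^ n * (a * b))) (c * ((s + t) ^ n * ((a + b) * b))) :=
        mul_sle_mul (sle_refl hid c) (mul_sle_mul (sle_refl hid ((s + t) ^ n)) inner)
      exact sle_trans (sle_congr (by rw [eab]) rfl hin) m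
  have hsub : M ⊆ D := by
    rintro ⟨a, b⟩ hm
    rw [memD]
    have ha := (hM.nz hm).1
    have hb := (hM.nz hm).2
    have j1 : (a + b, b) ∈ M := hM.join1 hm
    have j2 : (a + b, a) ∈ M := by
      have := hM.join1 (hM.symm hm)
      rwa [add_comm b a] at this
    have j3 := hM.mul j1 j2
    have habn : a + b ≠ 0 := ne_zero_of_sle (sle_add_left hid a b) ha
    have j4 : ((a + b) ^ 2, a * b) ∈ M :=
      hM.cross j3 (by ring) (pow_ne_zero' hc habn 2) (mul_ne_zero' hc ha hb)
    refine ⟨ha, hb, 0, (a + b) ^ 2, a * b, j4, ?_, ?_⟩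
    · exact sle_congr rfl (pow_two _) (mul_sle_mul (sle_add_left hid a b) (sle_add_right hid a b))
    · exact sle_congr (by ring) (by ring) (sle_refl hid ((a + b) ^ 2 * (a * b)))
  have hmemst : (s + t, t) ∈ D := by
    rw [memD]
    have e : s + t + t = s + t := by rw [add_assoc, hid t]
    refine ⟨ne_zero_of_sle (sle_add_right hid s t) ht, ht, 1, 1, 1, hM.diag h1n,
      sle_refl hid 1, ?_⟩
    exact sle_congr (by rw [e]; ring) (by ring) (sle_refl hid ((s + t) ^ 2 * t))
  have hAYD : (A, Y) ∈ D := by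
    by_contra hAYD
    exact hst ((hmax D hDadm hAYD hsub) ▸ hmemst)
  rw [memD] at hAYD
  obtain ⟨-, -, n, c, d, hmem, hdc, hin⟩ := hAYD
  have eAY : A + Y = A := by rw [add_comm]; exact hYA
  rw [eAY] at hin
  exact ⟨n, c, d, hmem, hdc, cancel_sle hc hA (sle_congr (by ring) (by ring) hin)⟩

lemma tot_mem (hid : ∀ x : Q, x + x = x)
    (hc : ∀ s x y : Q, s ≠ 0 → s * x = s * y → x = y)
    (h1n : (1 : Q) ≠ 0)
    {A Y : Q} (hY : Y ≠ 0) (hYA : sle Y A)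
    {M : Set (Q × Q)} (hM : AdmOn M) (hMav : (A, Y) ∉ M)
    (hmax : ∀ D : Set (Q × Q), AdmOn D → (A, Y) ∉ D → M ⊆ D → D = M)
    {s t : Q} (hs : s ≠ 0) (ht : t ≠ 0) :
    (s + t, t) ∈ M ∨ (s + t, s) ∈ M := by
  have hA : A ≠ 0 := ne_zero_of_sle hYA hY
  by_contra hcon
  push_neg at hcon
  obtain ⟨h1', h2'⟩ := hcon
  obtain ⟨n, c, d, hm, hdc, hin1⟩ := step hid hc h1n hY hYA hM hMav hmax hs ht h1'
  have h2'' : (t + s, s) ∉ M := by rwa [add_comm t s]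
  obtain ⟨m, c', d', hm', hdc', hin2⟩ := step hid hc h1n hY hYA hM hMav hmax ht hs h2''
  rw [add_comm t s] at hin2
  have key : sle ((s + t) ^ (n + m) * (A * (d * d')))
      ((s + t) ^ (n + m) * ((c * d' + c' * d) * Y)) := by
    have u1 := mul_sle_mul (sle_refl hid (d * (s + t) ^ n)) hin2
    have u2 := mul_sle_mul (sle_refl hid (d' * (s + t) ^ m)) hin1
    have e : (s + t) ^ (n + m) * (A * (d * d')) =
        (d * (s + t) ^ n) * (A * (d' * s ^ m)) + (d' * (s + t) ^ m) * (A * (d * t ^ n)) := by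
      rw [binom hid s t n m]; ring
    have e2 : (d * (s + t) ^ n) * (c' * ((s + t) ^ m * Y)) +
        (d' * (s + t) ^ m) * (c * ((s + t) ^ n * Y)) =
        (s + t) ^ (n + m) * ((c * d' + c' * d) * Y) := by ring
    exact sle_congr e e2.symm (add_sle_add u1 u2)
  have hstn : s + t ≠ 0 := ne_zero_of_sle (sle_add_right hid s t) ht
  have key2 : sle (A * (d * d')) ((c * d' + c' * d) * Y) :=
    cancel_sle hc (pow_ne_zero' hc hstn (n + m)) key
  have hmem : (c * d' + c' * d, d * d') ∈ M := AdmOn.join hid hc hM hm hm'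
  have h3 : sle (d * d') (c * d' + c' * d) :=
    sle_trans (mul_sle d' hdc) (sle_add_left hid (c * d') (c' * d))
  exact hMav (hM.convex hA hY hYA key2 h3 hmem)

end S7

namespace S7
variable {Q : Type*} [CommSemiring Q]

/-- the total quasi-order induced by a maximal admissible set -/
def ple (M : Set (Q × Q)) (u v : Q) : Prop := u = 0 ∨ (v ≠ 0 ∧ (u + v, v) ∈ M)

/-- the congruence induced by a maximal admissible set -/
def pcong (M : Set (Q × Q)) (u v : Q) : Prop :=
  (u = 0 ∧ v = 0) ∨ (u ≠ 0 ∧ v ≠ 0 ∧ (u, v) ∈ M)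

variable {M : Set (Q × Q)}

lemma ple_refl (hid : ∀ x : Q, x + x = x) (hM : AdmOn M) (u : Q) : ple M u u := by
  by_cases hu : u = 0
  · exact Or.inl hu
  · exact Or.inr ⟨hu, by rw [hid u]; exact hM.diag hu⟩

lemma pcong_refl (hid : ∀ x : Q, x + x = x) (hM : AdmOn M) (u : Q) : pcong M u u := by
  by_cases hu : u = 0
  · exact Or.inl ⟨hu, hu⟩
  · exact Or.inr ⟨hu, hu, hM.diag hu⟩

lemma pcong_symm (hM : AdmOn M) {u v : Q} (h : pcong M u v) : pcong M v u := by
  rcases h with ⟨h1, h2⟩ | ⟨h1, h2, h3⟩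
  · exact Or.inl ⟨h2, h1⟩
  · exact Or.inr ⟨h2, h1, hM.symm h3⟩

lemma pcong_trans (hM : AdmOn M) {u v w : Q} (h1 : pcong M u v) (h2 : pcong M v w) :
    pcong M u w := by
  rcases h1 with ⟨ha1, ha2⟩ | ⟨ha1, ha2, ha3⟩
  · rcases h2 with ⟨hb1, hb2⟩ | ⟨hb1, hb2, hb3⟩
    · exact Or.inl ⟨ha1, hb2⟩
    · exact absurd ha2 hb1
  · rcases h2 with ⟨hb1, hb2⟩ | ⟨hb1, hb2, hb3⟩
    · exact absurd hb1 ha2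
    · exact Or.inr ⟨ha1, hb2, hM.trans ha3 hb3⟩

lemma ple_ne_zero {u v : Q} (h : ple M u v) (hu : u ≠ 0) : v ≠ 0 := by
  rcases h with h | ⟨h1, -⟩
  · exact absurd h hu
  · exact h1

lemma ple_total
    (htot : ∀ s t : Q, s ≠ 0 → t ≠ 0 → (s + t, t) ∈ M ∨ (s + t, s) ∈ M)
    (u v : Q) : ple M u v ∨ ple M v u := by
  by_cases hu : u = 0
  · exact Or.inl (Or.inl hu)
  by_cases hv : v = 0
  · exact Or.inr (Or.inl hv)
  rcases htot u v hu hv with h | h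
  · exact Or.inl (Or.inr ⟨hv, h⟩)
  · refine Or.inr (Or.inr ⟨hu, ?_⟩)
    rwa [add_comm v u]

lemma pcong_iff (hM : AdmOn M) {u v : Q} :
    pcong M u v ↔ ple M u v ∧ ple M v u := by
  constructor
  · rintro (⟨h1, h2⟩ | ⟨h1, h2, h3⟩)
    · exact ⟨Or.inl h1, Or.inl h2⟩
    · exact ⟨Or.inr ⟨h2, hM.join1 h3⟩, Or.inr ⟨h1, hM.join1 (hM.symm h3)⟩⟩
  · rintro ⟨h1, h2⟩
    by_cases hu : u = 0
    · rcases h2 with h | ⟨h2a, -⟩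
      · exact Or.inl ⟨hu, h⟩
      · exact absurd hu h2a
    · rcases h1 with h | ⟨hv, hm1⟩
      · exact absurd h hu
      rcases h2 with h | ⟨-, hm2⟩
      · exact absurd h hv
      rw [add_comm v u] at hm2
      exact Or.inr ⟨hu, hv, hM.of_both hm1 hm2⟩

lemma ple_mul (hc : ∀ s x y : Q, s ≠ 0 → s * x = s * y → x = y) (hM : AdmOn M)
    {u v : Q} (h : ple M u v) (w : Q) : ple M (u * w) (v * w) := by
  rcases h with h | ⟨hv, hm⟩
  · exact Or.inl (by rw [h, zero_mul])
  by_cases hw : w = 0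
  · exact Or.inl (by rw [hw, mul_zero])
  refine Or.inr ⟨mul_ne_zero' hc hv hw, ?_⟩
  have := hM.mul hm (hM.diag hw)
  rwa [add_mul] at this

lemma ple_cancel (hid : ∀ x : Q, x + x = x)
    (hc : ∀ s x y : Q, s ≠ 0 → s * x = s * y → x = y) (hM : AdmOn M)
    {u v w : Q} (hw : w ≠ 0) (h : ple M (u * w) (v * w)) : ple M u v := by
  rcases h with h | ⟨hvw, hm⟩
  · refine Or.inl (hc w u 0 hw ?_)
    rw [mul_comm w u, h, mul_zero]
  have hv : v ≠ 0 := fun h0 => hvw (by rw [h0, zero_mul])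
  by_cases hu : u = 0
  · exact Or.inl hu
  have habn : u + v ≠ 0 := ne_zero_of_sle (sle_add_left hid u v) hu
  refine Or.inr ⟨hv, hM.cross hm (by ring) habn hv⟩

lemma ple_trans (hid : ∀ x : Q, x + x = x)
    (hc : ∀ s x y : Q, s ≠ 0 → s * x = s * y → x = y) (hM : AdmOn M)
    {u v w : Q} (h1 : ple M u v) (h2 : ple M v w) : ple M u w := by
  rcases h1 with h | ⟨hv, hm1⟩
  · exact Or.inl h
  rcases h2 with h | ⟨hw, hm2⟩
  · exact absurd h hv
  by_cases hu : u = 0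
  · exact Or.inl hu
  have hmem := hM.mul hm1 hm2
  have ha : u + w ≠ 0 := ne_zero_of_sle (sle_add_left hid u w) hu
  have p1 : sle ((u * v) * w) (((u + v) * (v + w)) * w) :=
    mul_sle_mul (mul_sle_mul (sle_add_left hid u v) (sle_add_left hid v w)) (sle_refl hid w)
  have p2 : sle ((v * w) * w) (((u + v) * (v + w)) * w) :=
    mul_sle_mul (mul_sle_mul (sle_add_right hid u v) (sle_add_right hid v w)) (sle_refl hid w)
  have h2' : sle ((u + w) * (v * w)) (((u + v) * (v + w)) * w) :=
    sle_congr (by ring) rfl (sle_add p1 p2)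
  have h3' : sle (v * w) ((u + v) * (v + w)) :=
    mul_sle_mul (sle_add_right hid u v) (sle_add_right hid v w)
  exact Or.inr ⟨hw, hM.convex ha hw (sle_add_right hid u w) h2' h3' hmem⟩

lemma ple_self_add (hid : ∀ x : Q, x + x = x) (hM : AdmOn M) (v w : Q) :
    ple M v (v + w) := by
  by_cases hv : v = 0
  · exact Or.inl hv
  have hvw : v + w ≠ 0 := ne_zero_of_sle (sle_add_left hid v w) hv
  have e : v + (v + w) = v + w := by rw [← add_assoc, hid v]
  exact Or.inr ⟨hvw, by rw [e]; exact hM.diag hvw⟩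

lemma ple_add_right (hid : ∀ x : Q, x + x = x)
    (hc : ∀ s x y : Q, s ≠ 0 → s * x = s * y → x = y) (hM : AdmOn M)
    {u v : Q} (h : ple M u v) (w : Q) : ple M (u + w) (v + w) := by
  by_cases hu : u = 0
  · rw [hu, zero_add]
    have h0 := ple_self_add hid hM w v
    rwa [add_comm w v] at h0
  have hm : ple M u (v + w) := ple_trans hid hc hM h (ple_self_add hid hM v w)
  rcases hm with h' | ⟨hvw, hm'⟩
  · exact absurd h' hu
  have e : (u + w) + (v + w) = u + (v + w) := by
    rw [show (u + w) + (v + w) = u + (v + (w + w)) by ring, hid w]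
  refine Or.inr ⟨hvw, ?_⟩
  rw [e]; exact hm'

lemma ple_sum (hid : ∀ x : Q, x + x = x)
    (hc : ∀ s x y : Q, s ≠ 0 → s * x = s * y → x = y) (hM : AdmOn M)
    {u v s : Q} (h1 : ple M u s) (h2 : ple M v s) : ple M (u + v) s := by
  have a1 : ple M (u + v) (s + v) := ple_add_right hid hc hM h1 v
  have a2 : ple M (v + s) (s + s) := ple_add_right hid hc hM h2 s
  rw [add_comm v s, hid s] at a2
  exact ple_trans hid hc hM a1 a2

lemma max_eq (hid : ∀ x : Q, x + x = x) (hM : AdmOn M) {u v : Q} (h : ple M u v) :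
    pcong M (u + v) v := by
  rcases h with h | ⟨hv, hm⟩
  · rw [h, zero_add]; exact pcong_refl hid hM v
  by_cases hu : u = 0
  · rw [hu, zero_add]; exact pcong_refl hid hM v
  exact Or.inr ⟨ne_zero_of_sle (sle_add_left hid u v) hu, hv, hm⟩

lemma pcong_isCong (hid : ∀ x : Q, x + x = x)
    (hc : ∀ s x y : Q, s ≠ 0 → s * x = s * y → x = y) (hM : AdmOn M) :
    IsCong (pcong M) := by
  refine ⟨⟨pcong_refl hid hM, pcong_symm hM, pcong_trans hM⟩, ?_, ?_⟩
  · intro a b c d h1 h2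
    rw [pcong_iff hM] at h1 h2 ⊢
    constructor
    · have a1 : ple M (a + c) (b + c) := ple_add_right hid hc hM h1.1 c
      have a2 : ple M (c + b) (d + b) := ple_add_right hid hc hM h2.1 b
      rw [add_comm c b, add_comm d b] at a2
      exact ple_trans hid hc hM a1 a2
    · have a1 : ple M (b + d) (a + d) := ple_add_right hid hc hM h1.2 d
      have a2 : ple M (d + a) (c + a) := ple_add_right hid hc hM h2.2 a
      rw [add_comm d a, add_comm c a] at a2
      exact ple_trans hid hc hM a1 a2
  · intro a b c d h1 h2
    rcases h1 with ⟨ha1, ha2⟩ | ⟨ha1, ha2, ha3⟩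
    · exact Or.inl ⟨by rw [ha1, zero_mul], by rw [ha2, zero_mul]⟩
    rcases h2 with ⟨hb1, hb2⟩ | ⟨hb1, hb2, hb3⟩
    · exact Or.inl ⟨by rw [hb1, mul_zero], by rw [hb2, mul_zero]⟩
    exact Or.inr ⟨mul_ne_zero' hc ha1 hb1, mul_ne_zero' hc ha2 hb2, hM.mul ha3 hb3⟩

/-- the key "two strictly smaller terms" contradiction -/
lemma core (hid : ∀ x : Q, x + x = x)
    (hc : ∀ s x y : Q, s ≠ 0 → s * x = s * y → x = y) (hM : AdmOn M)
    (htot : ∀ s t : Q, s ≠ 0 → t ≠ 0 → (s + t, t) ∈ M ∨ (s + t, s) ∈ M)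
    {x z y w : Q}
    (hxz : ple M x z) (hxzs : ¬ pcong M x z) (hyw : ple M y w) (hyws : ¬ pcong M y w)
    (hp : pcong M (x * y + z * w) (x * w + z * y)) : False := by
  have hz : z ≠ 0 := by
    intro h0
    rcases hxz with h | ⟨h1, -⟩
    · exact hxzs (Or.inl ⟨h, h0⟩)
    · exact h1 h0
  have hw : w ≠ 0 := by
    intro h0
    rcases hyw with h | ⟨h1, -⟩
    · exact hyws (Or.inl ⟨h, h0⟩)
    · exact h1 h0
  have nzx : ¬ ple M z x := fun h => hxzs ((pcong_iff hM).2 ⟨hxz, h⟩)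
  have nwy : ¬ ple M w y := fun h => hyws ((pcong_iff hM).2 ⟨hyw, h⟩)
  have su : ple M (x * w) (z * w) := ple_mul hc hM hxz w
  have sv : ple M (z * y) (z * w) := by
    have := ple_mul hc hM hyw z
    rwa [mul_comm y z, mul_comm w z] at this
  have sus : ¬ pcong M (x * w) (z * w) := by
    intro h
    exact nzx (ple_cancel hid hc hM hw ((pcong_iff hM).1 h).2)
  have svs : ¬ pcong M (z * y) (z * w) := by
    intro h
    have h2 := ((pcong_iff hM).1 h).2
    rw [mul_comm z w, mul_comm z y] at h2
    exact nwy (ple_cancel hid hc hM hz h2)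
  have hxy_zw : ple M (x * y) (z * w) :=
    ple_trans hid hc hM (ple_mul hc hM hxz y) sv
  have big : pcong M (x * y + z * w) (z * w) := max_eq hid hM hxy_zw
  have hq : pcong M (x * w + z * y) (z * w) :=
    pcong_trans hM (pcong_symm hM hp) big
  rcases ple_total htot (x * w) (z * y) with h | h
  · have hmx : pcong M (x * w + z * y) (z * y) := max_eq hid hM h
    exact svs (pcong_trans hM (pcong_symm hM hmx) hq)
  · have hmx : pcong M (z * y + x * w) (x * w) := max_eq hid hM h
    rw [add_comm (z * y) (x * w)] at hmx
    exact sus (pcong_trans hM (pcong_symm hM hmx) hq)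

lemma pcong_isPrime (hid : ∀ x : Q, x + x = x)
    (hc : ∀ s x y : Q, s ≠ 0 → s * x = s * y → x = y)
    (h1n : (1 : Q) ≠ 0) (hM : AdmOn M)
    (htot : ∀ s t : Q, s ≠ 0 → t ≠ 0 → (s + t, t) ∈ M ∨ (s + t, s) ∈ M) :
    IsPrimeCong (pcong M) := by
  constructor
  · rintro (⟨-, h1⟩ | ⟨h0, -, -⟩)
    · exact h1n h1
    · exact h0 rfl
  intro x y z w hp
  by_contra hcon
  push_neg at hcon
  obtain ⟨hxz, hyw⟩ := hcon
  rcases ple_total htot x z with h1 | h1 <;> rcases ple_total htot y w with h2 | h2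
  · exact core hid hc hM htot h1 hxz h2 hyw hp
  · -- x ≼ z, w ≼ y : apply core with (w, y, x, z)
    have hp2 : pcong M (w * x + y * z) (w * z + y * x) := by
      have h' := pcong_symm hM hp
      rw [show x * w + z * y = w * x + y * z by ring,
        show x * y + z * w = w * z + y * x by ring] at h'
      exact h'
    exact core hid hc hM htot h2 (fun h => hyw (pcong_symm hM h)) h1 hxz hp2
  · -- z ≼ x, y ≼ w : apply core with (y, w, z, x)
    have hp2 : pcong M (y * z + w * x) (y * x + w * z) := by
      have h' := pcong_symm hM hp
      rw [show x * w + z * y = y * z + w * x by ring,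
        show x * y + z * w = y * x + w * z by ring] at h'
      exact h'
    exact core hid hc hM htot h2 hyw h1 (fun h => hxz (pcong_symm hM h)) hp2
  · -- z ≼ x, w ≼ y : apply core with (z, x, w, y)
    have hp2 : pcong M (z * w + x * y) (z * y + x * w) := by
      rw [show z * w + x * y = x * y + z * w by ring,
        show z * y + x * w = x * w + z * y by ring]
      exact hp
    exact core hid hc hM htot h1 (fun h => hxz (pcong_symm hM h))
      h2 (fun h => hyw (pcong_symm hM h)) hp2

end S7

namespace S7
variable {Q : Type*} [CommSemiring Q]

lemma exists_prime_sep (hid : ∀ x : Q, x + x = x)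
    (hc : ∀ s x y : Q, s ≠ 0 → s * x = s * y → x = y) (h1n : (1 : Q) ≠ 0)
    {A Y : Q} (hY : Y ≠ 0) (hYA : sle Y A) (hAY : A ≠ Y) :
    ∃ p : Q → Q → Prop, IsCong p ∧ IsPrimeCong p ∧ ¬ p A Y := by
  obtain ⟨M, ⟨hM, hMav⟩, hmax⟩ := exists_max hid hc hAY
  have htot : ∀ s t : Q, s ≠ 0 → t ≠ 0 → (s + t, t) ∈ M ∨ (s + t, s) ∈ M :=
    fun s t hs ht => tot_mem hid hc h1n hY hYA hM hMav hmax hs ht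
  refine ⟨pcong M, pcong_isCong hid hc hM, pcong_isPrime hid hc h1n hM htot, ?_⟩
  rintro (⟨h1, -⟩ | ⟨-, -, h3⟩)
  · exact (ne_zero_of_sle hYA hY) h1
  · exact hMav h3

lemma add_eq_zero' (hid : ∀ x : Q, x + x = x) {u v : Q} (h : u + v = 0) : u = 0 :=
  eq_of_sle_of_eq_zero (sle_add_left hid u v) h

lemma qB_isCong (hid : ∀ x : Q, x + x = x)
    (hc : ∀ s x y : Q, s ≠ 0 → s * x = s * y → x = y) :
    IsCong (fun u v : Q => (u = 0 ↔ v = 0)) := by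
  refine ⟨⟨fun _ => Iff.rfl, Iff.symm, Iff.trans⟩, ?_, ?_⟩
  · intro a b c d h1 h2
    constructor
    · intro h
      have ha := add_eq_zero' hid h
      have hc' := add_eq_zero' hid (by rwa [add_comm] at h)
      rw [h1.1 ha, h2.1 hc', add_zero]
    · intro h
      have hb := add_eq_zero' hid h
      have hd := add_eq_zero' hid (by rwa [add_comm] at h)
      rw [h1.2 hb, h2.2 hd, add_zero]
  · intro a b c d h1 h2
    constructor
    · intro h
      by_cases ha : a = 0
      · rw [h1.1 ha, zero_mul]
      by_cases hcc : c = 0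
      · rw [h2.1 hcc, mul_zero]
      exact absurd h (mul_ne_zero' hc ha hcc)
    · intro h
      by_cases hb : b = 0
      · rw [h1.2 hb, zero_mul]
      by_cases hd : d = 0
      · rw [h2.2 hd, mul_zero]
      exact absurd h (mul_ne_zero' hc hb hd)

lemma qB_isPrime (hc : ∀ s x y : Q, s ≠ 0 → s * x = s * y → x = y)
    (h1n : (1 : Q) ≠ 0) :
    IsPrimeCong (fun u v : Q => (u = 0 ↔ v = 0)) := by
  constructor
  · intro h; exact h1n (h.1 rfl)
  intro x y z w h
  by_cases hx : x = 0 <;> by_cases hz : z = 0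
  · exact Or.inl (iff_of_true hx hz)
  · by_cases hy : y = 0 <;> by_cases hw : w = 0
    · exact Or.inr (iff_of_true hy hw)
    · exfalso; subst hx; subst hy; simp at h; exact mul_ne_zero' hc hz hw h
    · exfalso; subst hx; subst hw; simp at h; exact mul_ne_zero' hc hz hy h
    · exact Or.inr (iff_of_false hy hw)
  · by_cases hy : y = 0 <;> by_cases hw : w = 0
    · exact Or.inr (iff_of_true hy hw)
    · exfalso; subst hz; subst hy; simp at h; exact mul_ne_zero' hc hx hw h
    · exfalso; subst hz; subst hw; simp at h; exact mul_ne_zero' hc hx hy h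
    · exact Or.inr (iff_of_false hy hw)
  · exact Or.inl (iff_of_false hx hz)

end S7

open S7 in
theorem statement7' {R : Type*} [CommSemiring R]
    (hidem : ∀ x : R, x + x = x)
    (hsimple : ∀ I : Set R,
      0 ∈ I →
      (∀ a b, a ∈ I → b ∈ I → a + b ∈ I) →
      (∀ r a, a ∈ I → r * a ∈ I) →
      (∀ a b, a + b = b → b ∈ I → a ∈ I) →
      I = {0} ∨ I = Set.univ)
    (c : RingCon R) :
    (∀ x y : c.Quotient,
        (∀ p : c.Quotient → c.Quotient → Prop, IsCong p → IsPrimeCong p → p x y) → x = y) ↔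
      ∀ s x y : c.Quotient, s ≠ 0 → s * x = s * y → x = y := by
  have hidQ : ∀ x : c.Quotient, x + x = x := by
    intro x
    obtain ⟨a, rfl⟩ := Quot.exists_rep x
    exact congrArg (fun r : R => (r : c.Quotient)) (hidem a)
  constructor
  · -- reduced → cancellative
    intro hred s x y hs hsxy
    refine hred x y ?_
    intro p hpc hpp
    have hrefl := hpc.1.refl
    have h0 : p (s * x + 0 * y) (s * y + 0 * x) := by
      rw [zero_mul, zero_mul, add_zero, add_zero, hsxy]; exact hrefl _
    rcases hpp.2 s x 0 y h0 with h | h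
    · exfalso
      set I : Set R := {r : R | p ((r : c.Quotient)) 0} with hI
      have h0I : (0 : R) ∈ I := hrefl 0
      have hadd : ∀ a b : R, a ∈ I → b ∈ I → a + b ∈ I := by
        intro a b ha hb
        have h2 := hpc.2.1 _ _ _ _ ha hb
        rw [add_zero] at h2
        exact h2
      have hmul : ∀ r a : R, a ∈ I → r * a ∈ I := by
        intro r a ha
        have h2 := hpc.2.2 _ _ _ _ (hrefl ((r : R) : c.Quotient)) ha
        rw [mul_zero] at h2
        exact h2
      have hsat : ∀ a b : R, a + b = b → b ∈ I → a ∈ I := by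
        intro a b hab hb
        have h2 := hpc.2.1 _ _ _ _ (hrefl ((a : R) : c.Quotient)) hb
        rw [add_zero] at h2
        have e : ((a : R) : c.Quotient) + ((b : R) : c.Quotient) = ((b : R) : c.Quotient) := by
          rw [show ((a : R) : c.Quotient) + ((b : R) : c.Quotient)
            = (((a + b : R)) : c.Quotient) from rfl, hab]
        rw [e] at h2
        exact hpc.1.trans (hpc.1.symm h2) hb
      rcases hsimple I h0I hadd hmul hsat with hI0 | hIuniv
      · obtain ⟨r, rfl⟩ := Quot.exists_rep s
        have hr : r ∈ I := h
        rw [hI0] at hr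
        exact hs (by rw [Set.mem_singleton_iff] at hr; rw [hr]; rfl)
      · have h1I : (1 : R) ∈ I := by rw [hIuniv]; trivial
        exact hpp.1 (hpc.1.symm h1I)
    · exact h
  · -- cancellative → reduced
    intro hcanc x y H
    by_cases h01 : (0 : c.Quotient) = 1
    · have hall : ∀ z : c.Quotient, z = 0 := fun z => by
        rw [← mul_one z, ← h01, mul_zero]
      rw [hall x, hall y]
    have h1n : (1 : c.Quotient) ≠ 0 := fun h => h01 h.symm
    by_cases hxy : x = y
    · exact hxy
    exfalso
    have hq := H _ (qB_isCong hidQ hcanc) (qB_isPrime hcanc h1n)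
    by_cases hx0 : x = 0
    · exact hxy (by rw [hx0, ← hq.1 hx0])
    have hy0 : y ≠ 0 := fun h => hx0 (hq.2 h)
    by_cases hA : x + y = y
    · -- x + y = y ; separate (x+y) from x
      have hAx : x + y ≠ x := fun h => hxy (by rw [← h, hA])
      have hle : sle x (x + y) := sle_add_left hidQ x y
      obtain ⟨p, hpc, hpp, hnp⟩ := exists_prime_sep hidQ hcanc h1n hx0 hle hAx
      have hpxy := H p hpc hpp
      have h2 := hpc.2.1 _ _ _ _ hpxy (hpc.1.refl x)
      rw [hidQ x] at h2
      rw [add_comm y x] at h2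
      exact hnp (hpc.1.symm h2)
    · -- separate (x+y) from y
      have hle : sle y (x + y) := sle_add_right hidQ x y
      obtain ⟨p, hpc, hpp, hnp⟩ := exists_prime_sep hidQ hcanc h1n hy0 hle hA
      have hpxy := H p hpc hpp
      have h2 := hpc.2.1 _ _ _ _ hpxy (hpc.1.refl y)
      rw [hidQ y] at h2
      exact hnp h2


/-- Let `R` be a simple idempotent semiring and `c` a congruence on `R`.
Then the quotient `R/c` is reduced (the intersection of all prime congruences on it is
equality) if and only if `R/c` is multiplicatively cancellative. -/
theorem statement7 {R : Type*} [CommSemiring R]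
    (hidem : ∀ x : R, x + x = x)
    (hsimple : ∀ I : Set R,
      0 ∈ I →
      (∀ a b, a ∈ I → b ∈ I → a + b ∈ I) →
      (∀ r a, a ∈ I → r * a ∈ I) →
      (∀ a b, a + b = b → b ∈ I → a ∈ I) →
      I = {0} ∨ I = Set.univ)
    (c : RingCon R) :
    (∀ x y : c.Quotient,
        (∀ p : c.Quotient → c.Quotient → Prop, IsCong p → IsPrimeCong p → p x y) → x = y) ↔
      ∀ s x y : c.Quotient, s ≠ 0 → s * x = s * y → x = y :=
  statement7' hidem hsimple c
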